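/- Let D, B be square matrices over ℝ with B skew-symmetric and D symmetric, and suppose D(t) solves the Lax equation D' = [B(t), D(t)] where B(t) is continuous. Then the eigenvalues (spectrum) of D(t) are constant in t; more precisely, D(t) = U(t) D(0) U(t)* for the unitary U solving U' = B U, U(0) = I. -/

import Mathlib

open Matrix

attribute [local instance] Matrix.linftyOpNormedAddCommGroup Matrix.linftyOpNormedRing Matrix.linftyOpNormedAlgebra

lemma aux_const {n : ℕ} {f : ℝ → Matrix (Fin n) (Fin n) ℝ}
    (h : ∀ t, HasDerivAt f 0 t) (t : ℝ) : f t = f 0 :=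
  is_const_of_deriv_eq_zero (fun s => (h s).differentiableAt)
    (fun s => (h s).deriv) t 0

lemma aux_transpose_deriv {n : ℕ} {f' : Matrix (Fin n) (Fin n) ℝ} {g : ℝ → Matrix (Fin n) (Fin n) ℝ}
    {t : ℝ} (h : HasDerivAt g f' t) :
    HasDerivAt (fun s => (g s)ᵀ) f'ᵀ t := by
  have : HasDerivAt (fun s => (Matrix.transposeLinearEquiv (Fin n) (Fin n) ℝ ℝ) (g s))
      ((Matrix.transposeLinearEquiv (Fin n) (Fin n) ℝ ℝ) f') t := by
    exact ((Matrix.transposeLinearEquiv (Fin n) (Fin n) ℝ ℝ).toLinearMap.toContinuousLinearMap.hasFDerivAt.comp_hasDerivAt t h)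
  simpa using this

/-- Lax isospectrality: if `D' = [B,D]` with `B` skew-symmetric and `D` symmetric,
then `D(t) = U(t) D(0) U(t)ᵀ` for the unitary `U` solving `U' = B U`, `U 0 = 1`,
and the spectrum of `D(t)` is constant. -/
theorem stmt0 {n : ℕ} (D B U : ℝ → Matrix (Fin n) (Fin n) ℝ)
    (hBskew : ∀ t, (B t)ᵀ = -(B t))
    (hDsym : ∀ t, (D t)ᵀ = D t)
    (hBcont : Continuous B)
    (hD : ∀ t, HasDerivAt D (B t * D t - D t * B t) t)
    (hU : ∀ t, HasDerivAt U (B t * U t) t)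
    (hU0 : U 0 = 1) :
    (∀ t, D t = U t * D 0 * (U t)ᵀ) ∧
    (∀ t, spectrum ℝ (D t) = spectrum ℝ (D 0)) := by
  have hUT : ∀ t, HasDerivAt (fun s => (U s)ᵀ) ((U t)ᵀ * (B t)ᵀ) t := by
    intro t
    have := aux_transpose_deriv (hU t)
    simpa [Matrix.transpose_mul] using this
  -- Uᵀ U = 1
  have hW : ∀ t, (U t)ᵀ * U t = 1 := by
    intro t
    have h : ∀ s, HasDerivAt (fun r => (U r)ᵀ * U r) 0 s := by
      intro s
      have := (hUT s).mul (hU s)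
      refine this.congr_deriv ?_
      rw [hBskew s]
      noncomm_ring
    have := aux_const h t
    simpa [hU0] using this
  have hWr : ∀ t, U t * (U t)ᵀ = 1 := fun t =>
    mul_eq_one_comm.mp (hW t)
  -- Uᵀ D U = D 0
  have hG : ∀ t, (U t)ᵀ * D t * U t = D 0 := by
    intro t
    have h : ∀ s, HasDerivAt (fun r => (U r)ᵀ * D r * U r) 0 s := by
      intro s
      have := ((hUT s).mul (hD s)).mul (hU s)
      refine this.congr_deriv ?_
      rw [hBskew s, Pi.mul_apply]
      noncomm_ring
    have := aux_const h t
    simpa [hU0] using this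
  have key : ∀ t, D t = U t * D 0 * (U t)ᵀ := by
    intro t
    calc D t = (U t * (U t)ᵀ) * D t * (U t * (U t)ᵀ) := by simp [hWr t]
    _ = U t * ((U t)ᵀ * D t * U t) * (U t)ᵀ := by noncomm_ring
    _ = U t * D 0 * (U t)ᵀ := by rw [hG t]
  refine ⟨key, fun t => ?_⟩
  let u : (Matrix (Fin n) (Fin n) ℝ)ˣ := ⟨U t, (U t)ᵀ, hWr t, hW t⟩
  rw [key t]
  exact spectrum.units_conjugate (u := u)
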